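/- Let P₀ ∈ ℍ[t] and R ∈ ℝ[t] with P₀·P₁ = R for some P₁ ∈ ℍ[t], where neither P₀ nor P₁ has a nonconstant real polynomial factor. Then R = conj(P₀)·P₀ up to a real scalar and P₁ = conj(P₀) up to a real scalar. -/

import Mathlib

open Polynomial
open scoped Quaternion

/-- Coefficientwise conjugation of a quaternion polynomial. -/
noncomputable def qconj (P : ℍ[ℝ][X]) : ℍ[ℝ][X] :=
  ∑ i ∈ P.support, Polynomial.C (star (P.coeff i)) * Polynomial.X ^ i

lemma star_algF (x : ℝ) : star (algebraMap ℝ ℍ[ℝ] x) = algebraMap ℝ ℍ[ℝ] x :=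
  Quaternion.star_coe x

lemma qconj_coeff (P : ℍ[ℝ][X]) (n : ℕ) : (qconj P).coeff n = star (P.coeff n) := by
  rw [qconj, finset_sum_coeff]
  simp only [coeff_C_mul, coeff_X_pow, mul_ite, mul_one, mul_zero]
  rw [Finset.sum_ite_eq P.support n (fun i => star (P.coeff i))]
  by_cases h : n ∈ P.support
  · simp [h]
  · simp [h, Polynomial.notMem_support_iff.mp h]

lemma qconj_qconj (P : ℍ[ℝ][X]) : qconj (qconj P) = P := by
  apply Polynomial.ext; intro n; simp [qconj_coeff]

lemma qconj_zero : qconj (0 : ℍ[ℝ][X]) = 0 := by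
  apply Polynomial.ext; intro n; simp [qconj_coeff]

lemma qconj_mul (P Q : ℍ[ℝ][X]) : qconj (P * Q) = qconj Q * qconj P := by
  apply Polynomial.ext; intro n
  simp only [qconj_coeff, coeff_mul, star_sum, star_mul]
  conv_rhs => rw [← Finset.HasAntidiagonal.map_swap_antidiagonal, Finset.sum_map]
  refine Finset.sum_congr rfl fun x _ => ?_
  simp [qconj_coeff]

lemma qconj_map (r : ℝ[X]) :
    qconj (r.map (algebraMap ℝ ℍ[ℝ])) = r.map (algebraMap ℝ ℍ[ℝ]) := by
  apply Polynomial.ext; intro n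
  simp [qconj_coeff, Polynomial.coeff_map, star_algF]

lemma map_comm (r : ℝ[X]) (Q : ℍ[ℝ][X]) :
    r.map (algebraMap ℝ ℍ[ℝ]) * Q = Q * r.map (algebraMap ℝ ℍ[ℝ]) := by
  apply Polynomial.ext; intro n
  rw [coeff_mul, coeff_mul]
  conv_rhs => rw [← Finset.HasAntidiagonal.map_swap_antidiagonal, Finset.sum_map]
  refine Finset.sum_congr rfl fun x _ => ?_
  simp [Polynomial.coeff_map, Algebra.commutes, Quaternion.coe_commutes]

lemma real_of_selfstar (P : ℍ[ℝ][X]) (h : qconj P = P) :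
    ∃ r : ℝ[X], r.map (algebraMap ℝ ℍ[ℝ]) = P := by
  refine ⟨∑ i ∈ P.support, Polynomial.C ((P.coeff i).re) * Polynomial.X ^ i, ?_⟩
  apply Polynomial.ext; intro n
  rw [Polynomial.coeff_map, finset_sum_coeff]
  simp only [coeff_C_mul, coeff_X_pow, mul_ite, mul_one, mul_zero]
  rw [Finset.sum_ite_eq P.support n (fun i => (P.coeff i).re)]
  by_cases hn : n ∈ P.support
  · simp only [hn, if_true]
    have hs : star (P.coeff n) = P.coeff n := by rw [← qconj_coeff, h]
    have h2 := Quaternion.star_eq_self.mp hs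
    rw [show algebraMap ℝ ℍ[ℝ] ((P.coeff n).re) = ((P.coeff n).re : ℍ[ℝ]) from rfl, ← h2]
  · simp [hn, Polynomial.notMem_support_iff.mp hn]

lemma dvd_of_real_coprime (a b : ℝ[X]) (hab : IsCoprime a b) (Q S : ℍ[ℝ][X])
    (hS : a.map (algebraMap ℝ ℍ[ℝ]) * S = Q * b.map (algebraMap ℝ ℍ[ℝ])) :
    ∃ T, Q = a.map (algebraMap ℝ ℍ[ℝ]) * T := by
  obtain ⟨u, v, huv⟩ := hab
  set F := algebraMap ℝ ℍ[ℝ] with hF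
  refine ⟨Q * u.map F + v.map F * S, ?_⟩
  have h1 : (u * a + v * b).map F = 1 := by rw [huv, Polynomial.map_one]
  have e1 : Q * u.map F * a.map F = a.map F * (Q * u.map F) :=
    (map_comm a (Q * u.map F)).symm
  have e2 : Q * v.map F * b.map F = v.map F * (a.map F * S) := by
    rw [← map_comm v Q, mul_assoc, ← hS]
  have e3 : v.map F * (a.map F * S) = a.map F * (v.map F * S) := by
    rw [← mul_assoc, ← map_comm a (v.map F), mul_assoc]
  calc Q = Q * ((u * a + v * b).map F) := by rw [h1, mul_one]
    _ = Q * u.map F * a.map F + Q * v.map F * b.map F := by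
        rw [Polynomial.map_add, Polynomial.map_mul, Polynomial.map_mul]
        noncomm_ring
    _ = a.map F * (Q * u.map F) + a.map F * (v.map F * S) := by rw [e1, e2, e3]
    _ = a.map F * (Q * u.map F + v.map F * S) := (mul_add _ _ _).symm

/-- If `P₀ P₁ = R` with `R` real and neither `P₀` nor `P₁` having a nonconstant
real polynomial factor, then `R = conj P₀ ⬝ P₀` and `P₁ = conj P₀`, up to real
scalars. -/
theorem real_product_forces_conjugate (P₀ P₁ : ℍ[ℝ][X]) (R : ℝ[X])
    (h : P₀ * P₁ = R.map (algebraMap ℝ ℍ[ℝ]))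
    (hP₀ : ∀ r : ℝ[X], 0 < r.degree → ¬ r.map (algebraMap ℝ ℍ[ℝ]) ∣ P₀)
    (hP₁ : ∀ r : ℝ[X], 0 < r.degree → ¬ r.map (algebraMap ℝ ℍ[ℝ]) ∣ P₁) :
    ∃ lam mu : ℝ, lam ≠ 0 ∧ mu ≠ 0 ∧
      R.map (algebraMap ℝ ℍ[ℝ]) =
        Polynomial.C (algebraMap ℝ ℍ[ℝ] lam) * (qconj P₀ * P₀) ∧
      P₁ = Polynomial.C (algebraMap ℝ ℍ[ℝ] mu) * qconj P₀ := by
  have hFinj : Function.Injective (algebraMap ℝ ℍ[ℝ]) := (algebraMap ℝ ℍ[ℝ]).injective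
  have hXdeg : (0 : WithBot ℕ) < (Polynomial.X : ℝ[X]).degree := by
    rw [Polynomial.degree_X]; exact zero_lt_one
  have hP₀0 : P₀ ≠ 0 := by
    intro h0; exact hP₀ Polynomial.X hXdeg (by rw [h0]; exact dvd_zero _)
  have hP₁0 : P₁ ≠ 0 := by
    intro h0; exact hP₁ Polynomial.X hXdeg (by rw [h0]; exact dvd_zero _)
  have hR0 : R ≠ 0 := by
    intro h0
    rw [h0, Polynomial.map_zero] at h
    rcases mul_eq_zero.mp h with h' | h'
    exacts [hP₀0 h', hP₁0 h']
  have hq0 : qconj P₀ ≠ 0 := by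
    intro h0
    apply hP₀0
    rw [← qconj_qconj P₀, h0, qconj_zero]
  obtain ⟨N, hN⟩ := real_of_selfstar (qconj P₀ * P₀)
    (by rw [qconj_mul, qconj_qconj])
  have hN0 : N ≠ 0 := by
    intro h0
    rw [h0, Polynomial.map_zero] at hN
    exact mul_ne_zero hq0 hP₀0 hN.symm
  have key : N.map (algebraMap ℝ ℍ[ℝ]) * P₁ = qconj P₀ * R.map (algebraMap ℝ ℍ[ℝ]) := by
    rw [hN, mul_assoc, h]
  set g := GCDMonoid.gcd N R with hg
  have hg0 : g ≠ 0 := gcd_ne_zero_of_right hR0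
  set a := N / g with hadef
  set b := R / g with hbdef
  have hab : IsCoprime a b := isCoprime_div_gcd_div_gcd hR0
  have hNa : N = g * a := (EuclideanDomain.mul_div_cancel' hg0 (gcd_dvd_left N R)).symm
  have hRb : R = g * b := (EuclideanDomain.mul_div_cancel' hg0 (gcd_dvd_right N R)).symm
  have ha0 : a ≠ 0 := by intro h0; exact hN0 (by rw [hNa, h0, mul_zero])
  have hb0 : b ≠ 0 := by intro h0; exact hR0 (by rw [hRb, h0, mul_zero])
  have hmg0 : g.map (algebraMap ℝ ℍ[ℝ]) ≠ 0 := by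
    rwa [Ne, Polynomial.map_eq_zero_iff hFinj]
  have key2 : a.map (algebraMap ℝ ℍ[ℝ]) * P₁ = qconj P₀ * b.map (algebraMap ℝ ℍ[ℝ]) := by
    apply mul_left_cancel₀ hmg0
    calc g.map (algebraMap ℝ ℍ[ℝ]) * (a.map (algebraMap ℝ ℍ[ℝ]) * P₁)
        = (g * a).map (algebraMap ℝ ℍ[ℝ]) * P₁ := by
          rw [Polynomial.map_mul, mul_assoc]
      _ = N.map (algebraMap ℝ ℍ[ℝ]) * P₁ := by rw [← hNa]
      _ = qconj P₀ * R.map (algebraMap ℝ ℍ[ℝ]) := key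
      _ = qconj P₀ * (g.map (algebraMap ℝ ℍ[ℝ]) * b.map (algebraMap ℝ ℍ[ℝ])) := by
          rw [hRb, Polynomial.map_mul]
      _ = g.map (algebraMap ℝ ℍ[ℝ]) * (qconj P₀ * b.map (algebraMap ℝ ℍ[ℝ])) := by
          rw [← mul_assoc, ← map_comm g (qconj P₀), mul_assoc]
  obtain ⟨T, hT⟩ := dvd_of_real_coprime a b hab (qconj P₀) P₁ key2
  have haP₀ : a.map (algebraMap ℝ ℍ[ℝ]) ∣ P₀ := by
    refine ⟨qconj T, ?_⟩
    have h3 := congrArg qconj hT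
    rw [qconj_qconj, qconj_mul, qconj_map, ← map_comm] at h3
    exact h3
  have hadeg : a.degree ≤ 0 := not_lt.mp (fun hd => hP₀ a hd haP₀)
  have haC : a = Polynomial.C (a.coeff 0) := Polynomial.eq_C_of_degree_le_zero hadeg
  set α := a.coeff 0 with hα
  have hα0 : α ≠ 0 := by intro h0; exact ha0 (by rw [haC, h0, Polynomial.C_0])
  have hFα0 : algebraMap ℝ ℍ[ℝ] α ≠ 0 := fun h0 => hα0 (hFinj (by rw [h0, map_zero]))
  have hCFα0 : (Polynomial.C (algebraMap ℝ ℍ[ℝ] α) : ℍ[ℝ][X]) ≠ 0 := by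
    rwa [Ne, Polynomial.C_eq_zero]
  have key3 : Polynomial.C (algebraMap ℝ ℍ[ℝ] α) * P₁
      = qconj P₀ * b.map (algebraMap ℝ ℍ[ℝ]) := by
    rw [← Polynomial.map_C (f := algebraMap ℝ ℍ[ℝ]), ← haC]; exact key2
  have hcα : ∀ Q : ℍ[ℝ][X], Polynomial.C (algebraMap ℝ ℍ[ℝ] α) * Q
      = Q * Polynomial.C (algebraMap ℝ ℍ[ℝ] α) := by
    intro Q
    have h4 := map_comm (Polynomial.C α) Q
    rwa [Polynomial.map_C] at h4
  have hbP₁ : b.map (algebraMap ℝ ℍ[ℝ]) ∣ P₁ := by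
    refine ⟨Polynomial.C (algebraMap ℝ ℍ[ℝ] α⁻¹) * qconj P₀, ?_⟩
    apply mul_left_cancel₀ hCFα0
    rw [key3]
    symm
    calc Polynomial.C (algebraMap ℝ ℍ[ℝ] α) *
          (b.map (algebraMap ℝ ℍ[ℝ]) * (Polynomial.C (algebraMap ℝ ℍ[ℝ] α⁻¹) * qconj P₀))
        = b.map (algebraMap ℝ ℍ[ℝ]) * (Polynomial.C (algebraMap ℝ ℍ[ℝ] α) *
            (Polynomial.C (algebraMap ℝ ℍ[ℝ] α⁻¹) * qconj P₀)) := by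
          rw [← mul_assoc, hcα (b.map (algebraMap ℝ ℍ[ℝ])), mul_assoc]
      _ = b.map (algebraMap ℝ ℍ[ℝ]) * qconj P₀ := by
          have hCC : Polynomial.C (algebraMap ℝ ℍ[ℝ] α) *
              (Polynomial.C (algebraMap ℝ ℍ[ℝ] α⁻¹) * qconj P₀) = qconj P₀ := by
            rw [← mul_assoc, ← Polynomial.C_mul, ← map_mul, mul_inv_cancel₀ hα0,
              map_one, Polynomial.C_1, one_mul]
          rw [hCC]
      _ = qconj P₀ * b.map (algebraMap ℝ ℍ[ℝ]) := map_comm b (qconj P₀)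
  have hbdeg : b.degree ≤ 0 := not_lt.mp (fun hd => hP₁ b hd hbP₁)
  have hbC : b = Polynomial.C (b.coeff 0) := Polynomial.eq_C_of_degree_le_zero hbdeg
  set β := b.coeff 0 with hβ
  have hβ0 : β ≠ 0 := by intro h0; exact hb0 (by rw [hbC, h0, Polynomial.C_0])
  refine ⟨β * α⁻¹, β * α⁻¹, mul_ne_zero hβ0 (inv_ne_zero hα0),
    mul_ne_zero hβ0 (inv_ne_zero hα0), ?_, ?_⟩
  · have hβeq : β * α⁻¹ * α = β := by field_simp
    have hreal : R = Polynomial.C (β * α⁻¹) * N := by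
      rw [hRb, hNa, hbC]
      calc g * Polynomial.C β = g * Polynomial.C (β * α⁻¹ * α) := by rw [hβeq]
        _ = Polynomial.C (β * α⁻¹) * (g * Polynomial.C α) := by
            rw [Polynomial.C_mul]; ring
        _ = Polynomial.C (β * α⁻¹) * (g * a) := by rw [← haC]
    rw [hreal, Polynomial.map_mul, Polynomial.map_C, hN]
  · apply mul_left_cancel₀ hCFα0
    have key4 : Polynomial.C (algebraMap ℝ ℍ[ℝ] α) * P₁
        = qconj P₀ * Polynomial.C (algebraMap ℝ ℍ[ℝ] β) := by
      rw [key3, hbC, Polynomial.map_C]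
    rw [key4]
    have hcβ : Polynomial.C (algebraMap ℝ ℍ[ℝ] β) * qconj P₀
        = qconj P₀ * Polynomial.C (algebraMap ℝ ℍ[ℝ] β) := by
      have h5 := map_comm (Polynomial.C β) (qconj P₀)
      rwa [Polynomial.map_C] at h5
    have hβeq2 : α * (β * α⁻¹) = β := by field_simp
    rw [← hcβ, ← mul_assoc, ← Polynomial.C_mul, ← map_mul, hβeq2]
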